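/- Every infinite group G of cardinality κ can be partitioned into κ pairwise disjoint left ℵ₁-large subsets, i.e., there is a family of κ pairwise disjoint subsets covering G, each of which satisfies G = F·A for some countable set F ⊆ G. -/

import Mathlib

open Pointwise Cardinal

set_option linter.unusedSectionVars false
set_option maxHeartbeats 1000000

section Aleph1LargePartition

variable {G : Type*} [Group G]

/-- Choice of an element of a set, depending only on the set (with junk value `1`). -/
noncomputable def pickMem (s : Set G) : G := open Classical in if h : s.Nonempty then h.some else 1

lemma pickMem_mem {s : Set G} (h : s.Nonempty) : pickMem s ∈ s := by
  classical
  rw [pickMem]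
  rw [dif_pos h]
  exact h.some_mem

/-- The cardinality of the subgroup generated by a set. -/
lemma card_closure_le (S : Set G) :
    #(Subgroup.closure S : Set G) ≤ max #S ℵ₀ := by
  classical
  have h : ∀ x : (Subgroup.closure S : Set G),
      ∃ l : List ↥(S ∪ S⁻¹), (l.map Subtype.val).prod = (x : G) := by
    rintro ⟨x, hx⟩
    rw [SetLike.mem_coe, ← Subgroup.mem_toSubmonoid, Subgroup.closure_toSubmonoid] at hx
    obtain ⟨l, hl, hprod⟩ := Submonoid.exists_list_of_mem_closure hx
    refine ⟨l.pmap (fun y hy => ⟨y, hy⟩) hl, ?_⟩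
    simpa [List.map_pmap] using hprod
  choose f hf using h
  have hinj : Function.Injective f := by
    intro a b hab
    have h2 : ((f a).map Subtype.val).prod = ((f b).map Subtype.val).prod := by rw [hab]
    rw [hf a, hf b] at h2
    exact Subtype.ext h2
  have h3 : #↥(S ∪ S⁻¹) ≤ max #S ℵ₀ := by
    calc #↥(S ∪ S⁻¹) ≤ #S + #↥(S⁻¹) := Cardinal.mk_union_le _ _
    _ ≤ #S + #S := by
        gcongr
        rw [← Set.image_inv_eq_inv]
        exact Cardinal.mk_image_le
    _ ≤ max #S ℵ₀ + max #S ℵ₀ := by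
        gcongr <;> exact le_max_left _ _
    _ = max #S ℵ₀ := Cardinal.add_eq_self (le_max_right _ _)
  calc #(Subgroup.closure S : Set G) ≤ #(List ↥(S ∪ S⁻¹)) := Cardinal.mk_le_of_injective hinj
  _ ≤ max #↥(S ∪ S⁻¹) ℵ₀ := by
      rcases isEmpty_or_nonempty ↥(S ∪ S⁻¹) with he | hn
      · have : Countable (List ↥(S ∪ S⁻¹)) := by infer_instance
        exact Cardinal.mk_le_aleph0.trans (le_max_right _ _)
      · exact (Cardinal.mk_list_eq_max_mk_aleph0 _).le
  _ ≤ max (max #S ℵ₀) ℵ₀ := by gcongr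
  _ = max #S ℵ₀ := by rw [max_assoc, max_self]

lemma exists_not_mem_closure {S : Set G} (hS : #S < #G) (hbig : ℵ₀ < #G) :
    ∃ g : G, g ∉ Subgroup.closure S := by
  by_contra hcon
  push_neg at hcon
  have huniv : (Subgroup.closure S : Set G) = Set.univ := Set.eq_univ_of_forall hcon
  have h2 : #G ≤ max #S ℵ₀ := by
    calc #G = #(Set.univ : Set G) := Cardinal.mk_univ.symm
    _ = #(Subgroup.closure S : Set G) := by rw [huniv]
    _ ≤ max #S ℵ₀ := card_closure_le S
  rcases max_cases #S ℵ₀ with ⟨he, _⟩ | ⟨he, _⟩ <;> rw [he] at h2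
  · exact absurd h2 (not_le.mpr hS)
  · exact absurd h2 (not_le.mpr hbig)

/-! ### A fresh sequence and the base subgroup `Kstar` -/

noncomputable def yseq : ℕ → G :=
  (wellFounded_lt (α := ℕ)).fix fun n rec =>
    pickMem {g : G | g ∉ Subgroup.closure {x | ∃ m, ∃ h : m < n, rec m h = x}}

lemma yseq_eq (n : ℕ) : yseq (G := G) n =
    pickMem {g : G | g ∉ Subgroup.closure {x | ∃ m, ∃ _h : m < n, yseq m = x}} := by
  rw [yseq, WellFounded.fix_eq]

lemma yseq_spec (hbig : ℵ₀ < #G) (n : ℕ) :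
    yseq (G := G) n ∉ Subgroup.closure {x | ∃ m, ∃ _h : m < n, yseq m = x} := by
  have hfin : {x : G | ∃ m, ∃ _h : m < n, yseq m = x}.Finite := by
    have hsub : {x : G | ∃ m, ∃ _h : m < n, yseq m = x} ⊆
        (fun m => yseq (G := G) m) '' (Set.Iio n) := by
      rintro x ⟨m, hm, rfl⟩; exact ⟨m, hm, rfl⟩
    exact Set.Finite.subset ((Set.finite_Iio n).image _) hsub
  have hcard : #{x : G | ∃ m, ∃ _h : m < n, yseq m = x} < #G :=
    lt_of_le_of_lt hfin.countable.le_aleph0 hbig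
  obtain ⟨g, hg⟩ := exists_not_mem_closure hcard hbig
  rw [yseq_eq]
  have hne : {g : G | g ∉ Subgroup.closure {x | ∃ m, ∃ _h : m < n, yseq m = x}}.Nonempty := ⟨g, hg⟩
  exact pickMem_mem hne

lemma yseq_inj (hbig : ℵ₀ < #G) : Function.Injective (yseq (G := G)) := by
  intro m n hmn
  by_contra hne
  rcases Nat.lt_or_ge m n with h | h
  · exact yseq_spec hbig n (hmn ▸ Subgroup.subset_closure ⟨m, h, rfl⟩)
  · have h' : n < m := lt_of_le_of_ne h (Ne.symm hne)
    exact yseq_spec hbig m (hmn ▸ Subgroup.subset_closure ⟨n, h', rfl⟩)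

noncomputable def Kstar : Subgroup G := Subgroup.closure (Set.range (yseq (G := G)))

lemma Kstar_countable : ((Kstar (G := G)) : Set G).Countable := by
  rw [← Cardinal.le_aleph0_iff_set_countable]
  refine le_trans (card_closure_le _) (max_le ?_ le_rfl)
  exact (Set.countable_range _).le_aleph0

lemma Kstar_avoid (hbig : ℵ₀ < #G) {B : Set G} (hB : B.Finite) :
    ∃ u, u ∈ Kstar (G := G) ∧ u ∉ B := by
  have hinf : (Set.range (yseq (G := G))).Infinite :=
    Set.infinite_range_of_injective (yseq_inj hbig)
  obtain ⟨u, hu, hub⟩ := (hinf.diff hB).nonempty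
  exact ⟨u, Subgroup.subset_closure hu, hub⟩

/-! ### The transfinite chain of subgroups -/

variable (r : G → G → Prop) [IsWellOrder G r]

noncomputable def pick : G → G :=
  (IsWellFounded.wf (r := r)).fix fun i rec =>
    pickMem {g : G | g ∉ Subgroup.closure
      (((Kstar : Subgroup G) : Set G) ∪ {x | r x i} ∪ {x | ∃ j, ∃ h : r j i, rec j h = x})}

def chainGen (i : G) : Set G :=
  ((Kstar : Subgroup G) : Set G) ∪ {x | r x i} ∪ {x | ∃ j, ∃ _h : r j i, pick r j = x}

def Hopen (i : G) : Subgroup G := Subgroup.closure (chainGen r i)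

def Hclosed (i : G) : Subgroup G := Subgroup.closure (chainGen r i ∪ {i, pick r i})

lemma pick_eq (i : G) : pick r i = pickMem {g : G | g ∉ Hopen r i} := by
  rw [pick, WellFounded.fix_eq]
  rfl

lemma card_chainGen_lt (hr : Cardinal.ord #G = Ordinal.type r) (hbig : ℵ₀ < #G) (i : G) :
    #(chainGen r i) < #G := by
  have h1 : #((Kstar : Subgroup G) : Set G) < #G :=
    lt_of_le_of_lt Kstar_countable.le_aleph0 hbig
  have h2 : #{x : G | r x i} < #G := by
    have h := Cardinal.card_typein_lt (r := r) i hr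
    rw [Ordinal.card_typein] at h
    exact h
  have h3 : #{x : G | ∃ j, ∃ _h : r j i, pick r j = x} < #G := by
    have hsub : {x : G | ∃ j, ∃ _h : r j i, pick r j = x} ⊆
        Set.range (fun j : {j : G // r j i} => pick r j.1) := by
      rintro x ⟨j, hj, rfl⟩; exact ⟨⟨j, hj⟩, rfl⟩
    refine lt_of_le_of_lt (Cardinal.mk_le_mk_of_subset hsub) ?_
    refine lt_of_le_of_lt Cardinal.mk_range_le ?_
    have h := Cardinal.card_typein_lt (r := r) i hr
    rw [Ordinal.card_typein] at h
    exact h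
  calc #(chainGen r i) ≤ #(((Kstar : Subgroup G) : Set G) ∪ {x : G | r x i} : Set G)
      + #{x : G | ∃ j, ∃ _h : r j i, pick r j = x} := Cardinal.mk_union_le _ _
  _ ≤ (#((Kstar : Subgroup G) : Set G) + #{x : G | r x i})
      + #{x : G | ∃ j, ∃ _h : r j i, pick r j = x} := by
      gcongr
      exact Cardinal.mk_union_le _ _
  _ < #G := Cardinal.add_lt_of_lt hbig.le (Cardinal.add_lt_of_lt hbig.le h1 h2) h3

lemma pick_not_mem (hr : Cardinal.ord #G = Ordinal.type r) (hbig : ℵ₀ < #G) (i : G) :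
    pick r i ∉ Hopen r i := by
  obtain ⟨g, hg⟩ := exists_not_mem_closure (card_chainGen_lt r hr hbig i) hbig
  rw [pick_eq]
  have hne : {g : G | g ∉ Hopen r i}.Nonempty := ⟨g, hg⟩
  exact pickMem_mem hne

lemma Kstar_le_Hopen (i : G) : (Kstar : Subgroup G) ≤ Hopen r i := by
  intro x hx
  exact Subgroup.subset_closure (Or.inl (Or.inl hx))

lemma Hopen_le_Hclosed (i : G) : Hopen r i ≤ Hclosed r i :=
  Subgroup.closure_mono Set.subset_union_left

lemma Kstar_le_Hclosed (i : G) : (Kstar : Subgroup G) ≤ Hclosed r i :=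
  le_trans (Kstar_le_Hopen r i) (Hopen_le_Hclosed r i)

lemma Hclosed_le_Hopen {i i' : G} (h : r i i') : Hclosed r i ≤ Hopen r i' := by
  rw [Hclosed, Subgroup.closure_le]
  rintro x (((hx | hx) | hx) | hx)
  · exact Subgroup.subset_closure (Or.inl (Or.inl hx))
  · exact Subgroup.subset_closure (Or.inl (Or.inr (IsTrans.trans _ _ _ hx h)))
  · obtain ⟨j, hj, rfl⟩ := hx
    exact Subgroup.subset_closure (Or.inr ⟨j, IsTrans.trans _ _ _ hj h, rfl⟩)
  · rcases hx with rfl | hx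
    · exact Subgroup.subset_closure (Or.inl (Or.inr h))
    · rcases hx with rfl
      exact Subgroup.subset_closure (Or.inr ⟨i, h, rfl⟩)

lemma Hclosed_mono {i i' : G} (h : r i i' ∨ i = i') : Hclosed r i ≤ Hclosed r i' := by
  rcases h with h | rfl
  · exact le_trans (Hclosed_le_Hopen r h) (Hopen_le_Hclosed r i')
  · exact le_rfl

lemma self_mem_Hclosed (i : G) : i ∈ Hclosed r i :=
  Subgroup.subset_closure (Or.inr (Or.inl rfl))

lemma pick_mem_Hclosed (i : G) : pick r i ∈ Hclosed r i :=
  Subgroup.subset_closure (Or.inr (Or.inr rfl))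

lemma mem_Hopen_cases {i x : G} (hx : x ∈ Hopen r i) :
    x ∈ (Kstar : Subgroup G) ∨ ∃ j, r j i ∧ x ∈ Hclosed r j := by
  classical
  let U : Subgroup G :=
    { carrier := ((Kstar : Subgroup G) : Set G) ∪
        ⋃ (j : G), ⋃ (_ : r j i), (Hclosed r j : Set G)
      one_mem' := Or.inl (one_mem _)
      mul_mem' := by
        rintro a b (ha | ha) (hb | hb)
        · exact Or.inl (mul_mem ha hb)
        · obtain ⟨j, hj, hb⟩ := Set.mem_iUnion₂.mp hb
          exact Or.inr (Set.mem_iUnion₂.mpr ⟨j, hj, mul_mem (Kstar_le_Hclosed r j ha) hb⟩)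
        · obtain ⟨j, hj, ha⟩ := Set.mem_iUnion₂.mp ha
          exact Or.inr (Set.mem_iUnion₂.mpr ⟨j, hj, mul_mem ha (Kstar_le_Hclosed r j hb)⟩)
        · obtain ⟨j, hj, ha⟩ := Set.mem_iUnion₂.mp ha
          obtain ⟨j', hj', hb⟩ := Set.mem_iUnion₂.mp hb
          rcases trichotomous_of r j j' with h | h | h
          · exact Or.inr (Set.mem_iUnion₂.mpr
              ⟨j', hj', mul_mem (Hclosed_mono r (Or.inl h) ha) hb⟩)
          · subst h; exact Or.inr (Set.mem_iUnion₂.mpr ⟨j, hj, mul_mem ha hb⟩)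
          · exact Or.inr (Set.mem_iUnion₂.mpr
              ⟨j, hj, mul_mem ha (Hclosed_mono r (Or.inl h) hb)⟩)
      inv_mem' := by
        rintro a (ha | ha)
        · exact Or.inl (inv_mem ha)
        · obtain ⟨j, hj, ha⟩ := Set.mem_iUnion₂.mp ha
          exact Or.inr (Set.mem_iUnion₂.mpr ⟨j, hj, inv_mem ha⟩) }
  have hle : Hopen r i ≤ U := by
    rw [Hopen, Subgroup.closure_le]
    rintro x ((hx | hx) | hx)
    · exact Or.inl hx
    · exact Or.inr (Set.mem_iUnion₂.mpr ⟨x, hx, self_mem_Hclosed r x⟩)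
    · obtain ⟨j, hj, rfl⟩ := hx
      exact Or.inr (Set.mem_iUnion₂.mpr ⟨j, hj, pick_mem_Hclosed r j⟩)
  rcases hle hx with h | h
  · exact Or.inl h
  · obtain ⟨j, hj, h⟩ := Set.mem_iUnion₂.mp h
    exact Or.inr ⟨j, hj, h⟩

/-! ### Ranks, coset representatives, peeling, retractions -/

noncomputable def rk (g : G) : G :=
  (IsWellFounded.wf (r := r)).min {i : G | g ∈ Hclosed r i} ⟨g, self_mem_Hclosed r g⟩

lemma mem_Hclosed_rk (g : G) : g ∈ Hclosed r (rk r g) :=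
  WellFounded.min_mem (IsWellFounded.wf (r := r)) {i : G | g ∈ Hclosed r i}
    ⟨g, self_mem_Hclosed r g⟩

lemma not_mem_Hclosed_of_lt_rk {g j : G} (h : r j (rk r g)) : g ∉ Hclosed r j := fun hg =>
  WellFounded.not_lt_min (IsWellFounded.wf (r := r)) {i : G | g ∈ Hclosed r i}
    hg h

lemma rk_le_of_mem {g i : G} (hg : g ∈ Hclosed r i) : rk r g = i ∨ r (rk r g) i := by
  rcases trichotomous_of r (rk r g) i with h | h | h
  · exact Or.inr h
  · exact Or.inl h
  · exact absurd hg (not_mem_Hclosed_of_lt_rk r h)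

lemma layer_eq_rk {g i : G} (h1 : g ∈ Hclosed r i) (h2 : g ∉ Hopen r i) : i = rk r g := by
  rcases rk_le_of_mem r h1 with h | h
  · exact h.symm
  · exact absurd (Hclosed_le_Hopen r h (mem_Hclosed_rk r g)) h2

def cosetSet (i g : G) : Set G := {h : G | h * g⁻¹ ∈ Hopen r i}

noncomputable def rep (i g : G) : G := pickMem (cosetSet r i g)

lemma self_mem_cosetSet (i g : G) : g ∈ cosetSet r i g := by
  simp only [cosetSet, Set.mem_setOf_eq, mul_inv_cancel]
  exact one_mem _

lemma rep_spec (i g : G) : rep r i g * g⁻¹ ∈ Hopen r i :=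
  pickMem_mem ⟨g, self_mem_cosetSet r i g⟩

lemma cosetSet_mul {i f : G} (g : G) (hf : f ∈ Hopen r i) :
    cosetSet r i (f * g) = cosetSet r i g := by
  ext h
  simp only [cosetSet, Set.mem_setOf_eq]
  constructor
  · intro hh
    have h2 := mul_mem hh hf
    have h3 : h * (f * g)⁻¹ * f = h * g⁻¹ := by group
    rwa [h3] at h2
  · intro hh
    have h2 := mul_mem hh (inv_mem hf)
    have h3 : h * g⁻¹ * f⁻¹ = h * (f * g)⁻¹ := by group
    rwa [h3] at h2

noncomputable def peel (g : G) : G := g * (rep r (rk r g) g)⁻¹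

lemma peel_mem_Hopen (g : G) : peel r g ∈ Hopen r (rk r g) := by
  have h2 := inv_mem (rep_spec r (rk r g) g)
  rwa [mul_inv_rev, inv_inv] at h2

lemma peel_rk_lt {g : G} (hg : ∃ i, g ∉ Hclosed r i) : r (rk r (peel r g)) (rk r g) := by
  obtain ⟨i0, hi0⟩ := hg
  rcases mem_Hopen_cases r (peel_mem_Hopen r g) with hK | ⟨j, hj, hmem⟩
  · rcases trichotomous_of r (rk r (peel r g)) (rk r g) with h | h | h
    · exact h
    · exfalso
      have hall : ∀ j, ¬ r j (rk r (peel r g)) := fun j hj =>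
        not_mem_Hclosed_of_lt_rk r hj (Kstar_le_Hclosed r j hK)
      rw [h] at hall
      rcases trichotomous_of r i0 (rk r g) with h' | h' | h'
      · exact hall i0 h'
      · exact hi0 (h' ▸ mem_Hclosed_rk r g)
      · exact hi0 (Hclosed_mono r (Or.inl h') (mem_Hclosed_rk r g))
    · exact absurd (Kstar_le_Hclosed r (rk r g) hK) (not_mem_Hclosed_of_lt_rk r h)
  · rcases trichotomous_of r (rk r (peel r g)) j with h | h | h
    · exact IsTrans.trans _ _ _ h hj
    · rw [h]; exact hj
    · exact absurd hmem (not_mem_Hclosed_of_lt_rk r h)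

noncomputable def retr (i : G) : G → G :=
  (InvImage.wf (rk r) (IsWellFounded.wf (r := r))).fix fun g rec =>
    open Classical in
    if h : g ∈ Hclosed r i then g else rec (peel r g) (peel_rk_lt r ⟨i, h⟩)

lemma retr_of_mem {i g : G} (h : g ∈ Hclosed r i) : retr r i g = g := by
  rw [retr, WellFounded.fix_eq]
  exact dif_pos h

lemma retr_of_not_mem {i g : G} (h : g ∉ Hclosed r i) :
    retr r i g = retr r i (peel r g) := by
  rw [retr, WellFounded.fix_eq]
  exact dif_neg h

lemma retr_mem (i g : G) : retr r i g ∈ Hclosed r i := by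
  induction g using (InvImage.wf (rk r) (IsWellFounded.wf (r := r))).induction with
  | _ g IH =>
    by_cases h : g ∈ Hclosed r i
    · rwa [retr_of_mem r h]
    · rw [retr_of_not_mem r h]
      exact IH _ (peel_rk_lt r ⟨i, h⟩)

lemma rk_lt_of_not_mem {i g : G} (h : g ∉ Hclosed r i) : r i (rk r g) := by
  rcases trichotomous_of r i (rk r g) with h' | h' | h'
  · exact h'
  · exact absurd (h' ▸ mem_Hclosed_rk r g) h
  · exact absurd (Hclosed_mono r (Or.inl h') (mem_Hclosed_rk r g)) h

lemma rk_mul_eq {f g : G} (hf : f ∈ Hopen r (rk r g)) : rk r (f * g) = rk r g := by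
  have hmem : f * g ∈ Hclosed r (rk r g) :=
    mul_mem (Hopen_le_Hclosed r _ hf) (mem_Hclosed_rk r g)
  rcases rk_le_of_mem r hmem with h | h
  · exact h
  · exfalso
    have hg2 : f⁻¹ * (f * g) = g := by group
    have key : ∀ m : G, r m (rk r g) → f ∈ Hclosed r m → f * g ∈ Hclosed r m → False := by
      intro m hm hfm hfgm
      have h5 := mul_mem (inv_mem hfm) hfgm
      rw [hg2] at h5
      exact not_mem_Hclosed_of_lt_rk r hm h5
    rcases mem_Hopen_cases r hf with hK | ⟨j, hj, hmemf⟩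
    · exact key (rk r (f * g)) h (Kstar_le_Hclosed r _ hK) (mem_Hclosed_rk r (f * g))
    · rcases trichotomous_of r j (rk r (f * g)) with h' | h' | h'
      · exact key (rk r (f * g)) h (Hclosed_mono r (Or.inl h') hmemf)
          (mem_Hclosed_rk r (f * g))
      · exact key (rk r (f * g)) h (h' ▸ hmemf) (mem_Hclosed_rk r (f * g))
      · exact key j hj hmemf (Hclosed_mono r (Or.inl h') (mem_Hclosed_rk r (f * g)))

lemma peel_mul {f g : G} (hf : f ∈ Hopen r (rk r g)) : peel r (f * g) = f * peel r g := by
  have h1 : rk r (f * g) = rk r g := rk_mul_eq r hf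
  have h2 : rep r (rk r (f * g)) (f * g) = rep r (rk r g) g := by
    rw [h1, rep, rep, cosetSet_mul r g hf]
  rw [peel, peel, h2]
  group

lemma retr_equiv (i : G) {f : G} (hf : f ∈ Hclosed r i) (g : G) :
    retr r i (f * g) = f * retr r i g := by
  induction g using (InvImage.wf (rk r) (IsWellFounded.wf (r := r))).induction with
  | _ g IH =>
    by_cases h : g ∈ Hclosed r i
    · rw [retr_of_mem r h, retr_of_mem r (mul_mem hf h)]
    · have hfg : f * g ∉ Hclosed r i := by
        intro hmem
        have heq : g = f⁻¹ * (f * g) := by group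
        rw [heq] at h
        exact h (mul_mem (inv_mem hf) hmem)
      have hri : r i (rk r g) := rk_lt_of_not_mem r h
      have hfH : f ∈ Hopen r (rk r g) := Hclosed_le_Hopen r hri hf
      rw [retr_of_not_mem r hfg, retr_of_not_mem r h, peel_mul r hfH]
      exact IH _ (peel_rk_lt r ⟨i, h⟩)

lemma retr_coherent {i i' : G} (h : r i i' ∨ i = i') (g : G) :
    retr r i (retr r i' g) = retr r i g := by
  induction g using (InvImage.wf (rk r) (IsWellFounded.wf (r := r))).induction with
  | _ g IH =>
    by_cases hm : g ∈ Hclosed r i'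
    · rw [retr_of_mem r hm]
    · have hm2 : g ∉ Hclosed r i := fun hh => hm (Hclosed_mono r h hh)
      rw [retr_of_not_mem r hm, retr_of_not_mem r hm2]
      exact IH _ (peel_rk_lt r ⟨i', hm⟩)

lemma pathBad_finite (g : G) : {i : G | retr r i g ∉ Hopen r i}.Finite := by
  induction g using (InvImage.wf (rk r) (IsWellFounded.wf (r := r))).induction with
  | _ g IH =>
    by_cases hall : ∀ i, g ∈ Hclosed r i
    · refine Set.Finite.subset (Set.finite_singleton (rk r g)) ?_
      intro i hi
      simp only [Set.mem_setOf_eq] at hi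
      rw [retr_of_mem r (hall i)] at hi
      exact Set.mem_singleton_iff.mpr (layer_eq_rk r (hall i) hi)
    · push_neg at hall
      obtain ⟨i0, hi0⟩ := hall
      have hsub : {i : G | retr r i g ∉ Hopen r i} ⊆
          insert (rk r g) {i : G | retr r i (peel r g) ∉ Hopen r i} := by
        intro i hi
        simp only [Set.mem_setOf_eq] at hi
        by_cases h : g ∈ Hclosed r i
        · rw [retr_of_mem r h] at hi
          exact Set.mem_insert_iff.mpr (Or.inl (layer_eq_rk r h hi))
        · rw [retr_of_not_mem r h] at hi
          exact Set.mem_insert_iff.mpr (Or.inr hi)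
      exact Set.Finite.subset (Set.Finite.insert _ (IH _ (peel_rk_lt r ⟨i0, hi0⟩))) hsub

/-! ### The witness subgroup at each stage -/

noncomputable def Mgrp (i : G) : Subgroup G :=
  Subgroup.closure (((Kstar : Subgroup G) : Set G) ∪ {pick r i})

lemma Mgrp_countable (i : G) : ((Mgrp r i : Subgroup G) : Set G).Countable := by
  rw [← Cardinal.le_aleph0_iff_set_countable]
  refine le_trans (card_closure_le _) (max_le ?_ le_rfl)
  exact (Kstar_countable.union (Set.countable_singleton _)).le_aleph0

lemma Kstar_le_Mgrp (i : G) : (Kstar : Subgroup G) ≤ Mgrp r i := fun x hx =>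
  Subgroup.subset_closure (Or.inl hx)

lemma Mgrp_le_Hclosed (i : G) : Mgrp r i ≤ Hclosed r i := by
  rw [Mgrp, Subgroup.closure_le]
  rintro x (hx | rfl)
  · exact Kstar_le_Hclosed r i hx
  · exact pick_mem_Hclosed r i

/-! ### Seeds -/

def LayerSet (i : G) : Set G := (Hclosed r i : Set G) \ (Hopen r i : Set G)

def MCoset (i y : G) : Set G := {x : G | x * y⁻¹ ∈ Mgrp r i}

def GoodPt (i : G) (C : Set G) (prior : ∀ j, r j i → Set G) : Set G :=
  {p : G | p ∈ C ∩ LayerSet r i ∧ ∀ j, ∀ h : r j i, retr r j p ∉ prior j h}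

noncomputable def Seeds : G → Set G :=
  (IsWellFounded.wf (r := r)).fix fun i prior =>
    ⋃ y ∈ LayerSet r i, {pickMem (GoodPt r i (MCoset r i y) prior)}

lemma Seeds_eq (i : G) : Seeds r i =
    ⋃ y ∈ LayerSet r i, {pickMem (GoodPt r i (MCoset r i y) (fun j _ => Seeds r j))} := by
  rw [Seeds, WellFounded.fix_eq]

def SeedGood (i : G) : Prop :=
  ∀ y ∈ LayerSet r i, (GoodPt r i (MCoset r i y) (fun j _ => Seeds r j)).Nonempty

lemma seeds_elem {i p : G} (hp : p ∈ Seeds r i) :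
    ∃ y ∈ LayerSet r i, p = pickMem (GoodPt r i (MCoset r i y) (fun j _ => Seeds r j)) := by
  rw [Seeds_eq] at hp
  obtain ⟨y, hy, hp⟩ := Set.mem_iUnion₂.mp hp
  exact ⟨y, hy, Set.mem_singleton_iff.mp hp⟩

lemma seeds_goodpt {i p : G} (hg : SeedGood r i) (hp : p ∈ Seeds r i) :
    ∃ y ∈ LayerSet r i, p ∈ GoodPt r i (MCoset r i y) (fun j _ => Seeds r j) := by
  obtain ⟨y, hy, rfl⟩ := seeds_elem r hp
  exact ⟨y, hy, pickMem_mem (hg y hy)⟩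

lemma seeds_sub_of_good {i : G} (hg : SeedGood r i) : Seeds r i ⊆ LayerSet r i := by
  intro p hp
  obtain ⟨y, hy, hgp⟩ := seeds_goodpt r hg hp
  exact hgp.1.2

lemma seeds_avoid_of_good {i : G} (hg : SeedGood r i) {p : G} (hp : p ∈ Seeds r i) :
    ∀ j, ∀ _h : r j i, retr r j p ∉ Seeds r j := by
  obtain ⟨y, hy, hgp⟩ := seeds_goodpt r hg hp
  exact hgp.2

lemma seeds_hit_of_good {i : G} (hg : SeedGood r i) {y : G} (hy : y ∈ LayerSet r i) :
    ∃ p, p ∈ Seeds r i ∧ p ∈ MCoset r i y := by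
  refine ⟨pickMem (GoodPt r i (MCoset r i y) (fun j _ => Seeds r j)), ?_, ?_⟩
  · rw [Seeds_eq]
    exact Set.mem_iUnion₂.mpr ⟨y, hy, rfl⟩
  · exact (pickMem_mem (hg y hy)).1.1

lemma MCoset_congr {i y y' : G} (h : y * y'⁻¹ ∈ Mgrp r i) : MCoset r i y = MCoset r i y' := by
  ext x
  simp only [MCoset, Set.mem_setOf_eq]
  constructor
  · intro hx
    have h2 := mul_mem hx h
    have h3 : x * y⁻¹ * (y * y'⁻¹) = x * y'⁻¹ := by group
    rwa [h3] at h2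
  · intro hx
    have h2 := mul_mem hx (inv_mem h)
    have h3 : x * y'⁻¹ * (y * y'⁻¹)⁻¹ = x * y⁻¹ := by group
    rwa [h3] at h2

lemma seeds_unique_of_good {i : G} (hg : SeedGood r i) {p p' : G}
    (hp : p ∈ Seeds r i) (hp' : p' ∈ Seeds r i) (hq : p * p'⁻¹ ∈ Kstar) : p = p' := by
  obtain ⟨y, hy, rfl⟩ := seeds_elem r hp
  obtain ⟨y', hy', rfl⟩ := seeds_elem r hp'
  set p := pickMem (GoodPt r i (MCoset r i y) (fun j _ => Seeds r j)) with hpdef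
  set p' := pickMem (GoodPt r i (MCoset r i y') (fun j _ => Seeds r j)) with hpdef'
  have h1 : p * y⁻¹ ∈ Mgrp r i := (pickMem_mem (hg y hy)).1.1
  have h2 : p' * y'⁻¹ ∈ Mgrp r i := (pickMem_mem (hg y' hy')).1.1
  have hyy : y * y'⁻¹ ∈ Mgrp r i := by
    have h4 := mul_mem (mul_mem (inv_mem h1) (Kstar_le_Mgrp r i hq)) h2
    have h5 : (p * y⁻¹)⁻¹ * (p * p'⁻¹) * (p' * y'⁻¹) = y * y'⁻¹ := by group
    rwa [h5] at h4
  have hcc : MCoset r i y = MCoset r i y' := MCoset_congr r hyy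
  rw [hpdef, hpdef', hcc]

lemma seeds_good_all (hbig : ℵ₀ < #G) : ∀ i : G, SeedGood r i := by
  intro i
  induction i using (IsWellFounded.wf (r := r)).induction with
  | _ i IH =>
    intro y hy
    set Bad : Set G := ⋃ j ∈ ({j : G | retr r j y ∉ Hopen r j} ∩ {j : G | r j i}),
      {u : G | u ∈ (Kstar : Subgroup G) ∧ u * retr r j y ∈ Seeds r j} with hBad
    have hBadFin : Bad.Finite := by
      refine Set.Finite.biUnion ((pathBad_finite r y).inter_of_left _) ?_
      intro j hj
      rcases hj with ⟨hj1, hj2⟩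
      refine Set.Subsingleton.finite ?_
      intro u hu u' hu'
      simp only [Set.mem_setOf_eq] at hu hu'
      have hq : (u * retr r j y) * (u' * retr r j y)⁻¹ ∈ (Kstar : Subgroup G) := by
        have h5 : (u * retr r j y) * (u' * retr r j y)⁻¹ = u * u'⁻¹ := by group
        rw [h5]
        exact mul_mem hu.1 (inv_mem hu'.1)
      have heq := seeds_unique_of_good r (IH j hj2) hu.2 hu'.2 hq
      exact mul_right_cancel heq
    obtain ⟨u₀, hu₀K, hu₀B⟩ := Kstar_avoid hbig hBadFin
    refine ⟨u₀ * y, ⟨⟨?_, ?_, ?_⟩, ?_⟩⟩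
    · show u₀ * y * y⁻¹ ∈ Mgrp r i
      have h5 : u₀ * y * y⁻¹ = u₀ := by group
      rw [h5]
      exact Kstar_le_Mgrp r i hu₀K
    · exact mul_mem (Kstar_le_Hclosed r i hu₀K) hy.1
    · intro hmem
      have hyH : y ∈ Hopen r i := by
        have h5 : u₀⁻¹ * (u₀ * y) = y := by group
        rw [← h5]
        exact mul_mem (inv_mem (Kstar_le_Hopen r i hu₀K)) hmem
      exact hy.2 hyH
    · intro j hj hmem
      rw [retr_equiv r j (Kstar_le_Hclosed r j hu₀K) y] at hmem
      have hLj : retr r j y ∉ Hopen r j := by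
        intro hH
        have h6 : u₀ * retr r j y ∈ Hopen r j :=
          mul_mem (Kstar_le_Hopen r j hu₀K) hH
        have h7 := seeds_sub_of_good r (IH j hj) hmem
        exact h7.2 h6
      have hbad : u₀ ∈ Bad := by
        rw [hBad]
        exact Set.mem_iUnion₂.mpr ⟨j, ⟨hLj, hj⟩, ⟨hu₀K, hmem⟩⟩
      exact hu₀B hbad

/-! ### The pieces -/

def Piece (i : G) : Set G := {x : G | retr r i x ∈ Seeds r i}

def FSet (i : G) : Set G :=
  ((Mgrp r i : Subgroup G) : Set G) ∪ (fun m => pick r i * m) '' ((Mgrp r i : Subgroup G) : Set G)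

lemma FSet_countable (i : G) : (FSet r i).Countable :=
  (Mgrp_countable r i).union ((Mgrp_countable r i).image _)

lemma piece_large (hr : Cardinal.ord #G = Ordinal.type r) (hbig : ℵ₀ < #G) (i g : G) :
    ∃ f ∈ FSet r i, f⁻¹ * g ∈ Piece r i := by
  have hw : retr r i g ∈ Hclosed r i := retr_mem r i g
  set w := retr r i g with hwdef
  by_cases hcase : w ∈ Hopen r i
  · -- the retraction is "ancient"; use the jumper `pick r i`
    set j := pick r i with hjdef
    have hj1 : j ∈ Hclosed r i := pick_mem_Hclosed r i
    have hj2 : j ∉ Hopen r i := pick_not_mem r hr hbig i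
    have hy' : j⁻¹ * w ∈ LayerSet r i := by
      constructor
      · exact mul_mem (inv_mem hj1) (Hopen_le_Hclosed r i hcase)
      · intro hmem
        have hjH : j⁻¹ ∈ Hopen r i := by
          have h5 : (j⁻¹ * w) * w⁻¹ = j⁻¹ := by group
          rw [← h5]
          exact mul_mem hmem (inv_mem hcase)
        exact hj2 (by simpa using inv_mem hjH)
    obtain ⟨p, hpS, hpC⟩ := seeds_hit_of_good r (seeds_good_all r hbig i) hy'
    have hpC' : p * (j⁻¹ * w)⁻¹ ∈ Mgrp r i := hpC
    refine ⟨j * (p * (j⁻¹ * w)⁻¹)⁻¹, Or.inr ⟨(p * (j⁻¹ * w)⁻¹)⁻¹, inv_mem hpC', rfl⟩, ?_⟩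
    show retr r i ((j * (p * (j⁻¹ * w)⁻¹)⁻¹)⁻¹ * g) ∈ Seeds r i
    have hfH : (j * (p * (j⁻¹ * w)⁻¹)⁻¹)⁻¹ ∈ Hclosed r i := by
      exact inv_mem (mul_mem hj1 (inv_mem (Mgrp_le_Hclosed r i hpC')))
    rw [retr_equiv r i hfH g, ← hwdef]
    have h5 : (j * (p * (j⁻¹ * w)⁻¹)⁻¹)⁻¹ * w = p := by group
    rw [h5]
    exact hpS
  · have hyL : w ∈ LayerSet r i := ⟨hw, hcase⟩
    obtain ⟨p, hpS, hpC⟩ := seeds_hit_of_good r (seeds_good_all r hbig i) hyL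
    have hpC' : p * w⁻¹ ∈ Mgrp r i := hpC
    refine ⟨(p * w⁻¹)⁻¹, Or.inl (inv_mem hpC'), ?_⟩
    show retr r i (((p * w⁻¹)⁻¹)⁻¹ * g) ∈ Seeds r i
    have hfH : ((p * w⁻¹)⁻¹)⁻¹ ∈ Hclosed r i :=
      inv_mem (inv_mem (Mgrp_le_Hclosed r i hpC'))
    rw [retr_equiv r i hfH g, ← hwdef]
    have h5 : ((p * w⁻¹)⁻¹)⁻¹ * w = p := by group
    rw [h5]
    exact hpS

lemma piece_disjoint_core (hbig : ℵ₀ < #G) {i i' : G} (h : r i i') {x : G}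
    (hx : x ∈ Piece r i) (hx' : x ∈ Piece r i') : False := by
  have hs : retr r i' x ∈ Seeds r i' := hx'
  have havoid := seeds_avoid_of_good r (seeds_good_all r hbig i') hs i h
  have hcoh : retr r i (retr r i' x) = retr r i x := retr_coherent r (Or.inl h) x
  rw [hcoh] at havoid
  exact havoid hx

lemma piece_disjoint (hbig : ℵ₀ < #G) {i i' : G} (hne : i ≠ i') :
    Disjoint (Piece r i) (Piece r i') := by
  rw [Set.disjoint_left]
  intro x hx hx'
  rcases trichotomous_of r i i' with h | h | h
  · exact piece_disjoint_core r hbig h hx hx'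
  · exact hne h
  · exact piece_disjoint_core r hbig h hx' hx

end Aleph1LargePartition

/-! ### The main theorem -/

theorem infinite_group_partition_left_aleph1_large (G : Type*) [Group G] [Infinite G] :
    ∃ A : G → Set G,
      Pairwise (Function.onFun Disjoint A) ∧
      (⋃ g, A g) = Set.univ ∧
      ∀ g, ∃ F : Set G, F.Countable ∧ F * A g = Set.univ := by
  classical
  by_cases hc : Countable G
  · refine ⟨fun g => {g}, ?_, ?_, ?_⟩
    · intro a b hab
      simp only [Function.onFun, Set.disjoint_singleton]
      exact hab
    · ext x; simp
    · intro g
      refine ⟨Set.univ, Set.countable_univ, ?_⟩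
      ext x
      simp only [Set.mem_univ, iff_true]
      exact ⟨x * g⁻¹, trivial, g, rfl, by group⟩
  · -- uncountable case
    have hbig : ℵ₀ < #G := by
      rw [← not_le]
      intro hle
      exact hc (Cardinal.mk_le_aleph0_iff.mp hle)
    obtain ⟨r, wo, hr⟩ := Cardinal.ord_eq G
    haveI := wo
    set i₀ : G := Classical.arbitrary G with hi₀
    set A : G → Set G := fun i =>
      if i = i₀ then Piece r i ∪ (Set.univ \ ⋃ i', Piece r i') else Piece r i with hA
    have hPieceSub : ∀ i, Piece r i ⊆ A i := by
      intro i x hx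
      simp only [hA]
      by_cases h : i = i₀
      · rw [if_pos h]; exact Or.inl hx
      · rw [if_neg h]; exact hx
    have hAsub : ∀ i, i ≠ i₀ → A i = Piece r i := by
      intro i h
      simp only [hA, if_neg h]
    refine ⟨A, ?_, ?_, ?_⟩
    · -- pairwise disjoint
      intro a b hab
      have hrest : ∀ c, Disjoint (Set.univ \ ⋃ i', Piece r i') (Piece r c) := by
        intro c
        rw [Set.disjoint_left]
        intro x hx hxc
        exact hx.2 (Set.mem_iUnion.mpr ⟨c, hxc⟩)
      show Disjoint (A a) (A b)
      have hA' : ∀ c, A c =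
          if c = i₀ then Piece r c ∪ (Set.univ \ ⋃ i', Piece r i') else Piece r c :=
        fun c => rfl
      by_cases ha : a = i₀ <;> by_cases hb : b = i₀
      · exact absurd (ha.trans hb.symm) hab
      · rw [hA' a, hA' b, if_pos ha, if_neg hb]
        exact Disjoint.union_left (piece_disjoint r hbig hab) (hrest b)
      · rw [hA' a, hA' b, if_neg ha, if_pos hb]
        exact Disjoint.union_right (piece_disjoint r hbig hab) ((hrest a).symm)
      · rw [hA' a, hA' b, if_neg ha, if_neg hb]
        exact piece_disjoint r hbig hab
    · -- covers
      rw [Set.eq_univ_iff_forall]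
      intro x
      by_cases hx : x ∈ ⋃ i', Piece r i'
      · obtain ⟨i, hi⟩ := Set.mem_iUnion.mp hx
        exact Set.mem_iUnion.mpr ⟨i, hPieceSub i hi⟩
      · refine Set.mem_iUnion.mpr ⟨i₀, ?_⟩
        simp only [hA, if_pos rfl]
        exact Or.inr ⟨trivial, hx⟩
    · -- each piece is ℵ₁-large
      intro i
      refine ⟨FSet r i, FSet_countable r i, ?_⟩
      rw [Set.eq_univ_iff_forall]
      intro g
      obtain ⟨f, hf, hfp⟩ := piece_large r hr hbig i g
      refine Set.mem_mul.mpr ⟨f, hf, f⁻¹ * g, hPieceSub i hfp, ?_⟩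
      group
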